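/- Let X be a uniformly perfect metric space carrying an (α_n)-regular structure {Q_{n,i}, x_{n,i}, r_{n,i}}, and let μ be a doubling measure on X. Then there exists a constant C_μ ≥ 1, depending only on the doubling constant of μ and the structure constants, such that whenever IN(B(x,r),n) ≠ ∅, one has (1/C_μ) μ(COV(B(x,2r),n)) ≤ μ(B(x,r)) ≤ C_μ μ(IN(B(x,r),n)). -/

import Mathlib

open MeasureTheory Metric Set Filter

/-- A measure is doubling with constant `C`:
`0 < μ(B(x,2r)) ≤ C·μ(B(x,r)) < ∞` for all `x` and `r > 0`. -/
def IsDoublingWith {X : Type*} [MetricSpace X] [MeasurableSpace X]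
    (μ : Measure X) (C : NNReal) : Prop :=
  ∀ (x : X) (r : ℝ), 0 < r →
    0 < μ (ball x (2 * r)) ∧ μ (ball x (2 * r)) ≤ (C : ENNReal) * μ (ball x r) ∧
      (C : ENNReal) * μ (ball x r) < ⊤

/-- A doubling measure: doubling with some constant `C ≥ 1`. -/
def IsDoublingMeasure {X : Type*} [MetricSpace X] [MeasurableSpace X]
    (μ : Measure X) : Prop :=
  ∃ C : NNReal, 1 ≤ C ∧ IsDoublingWith μ C

/-- A uniformly perfect metric space. -/
def UniformlyPerfect (X : Type*) [MetricSpace X] : Prop :=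
  (∃ x y : X, x ≠ y) ∧
    ∃ D : ℝ, 1 ≤ D ∧ ∀ (x : X) (r : ℝ), 0 < r →
      ((Set.univ : Set X) \ ball x r).Nonempty → (ball x r \ ball x (r / D)).Nonempty

/-- A (metrically) doubling space: there is `N` such that every ball of radius `r`
is covered by `N` balls of radius `r/2`. -/
def DoublingSpace (X : Type*) [MetricSpace X] : Prop :=
  ∃ N : ℕ, ∀ (x : X) (r : ℝ), 0 < r →
    ∃ s : Finset X, s.card ≤ N ∧ ball x r ⊆ ⋃ y ∈ s, ball y (r / 2)

/-- Ahlfors `q`-regularity of the measure `H` with constant `C`. -/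
def AhlforsRegular {X : Type*} [MetricSpace X] [MeasurableSpace X]
    (H : Measure X) (q C : ℝ) : Prop :=
  ∀ (x : X) (r : ℝ), 0 < r →
    ENNReal.ofReal (r ^ q / C) ≤ H (ball x r) ∧ H (ball x r) ≤ ENNReal.ofReal (C * r ^ q)

/-- An `(α n)`-regular structure on `X`: Borel "cubes" `Q n i` (for `i ∈ idx n`) with
centers `ctr n i`, radii `rad n i` and constants `d, C₁, C₂, C₃(·)` satisfying
conditions (I)-(V) of Ojala's definition of `(α n)`-regular sets. -/
structure RegularStructure (X : Type*) [MetricSpace X] [MeasurableSpace X]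
    (α : ℕ → ℝ) where
  idx : ℕ → Set ℕ
  Q : ℕ → ℕ → Set X
  ctr : ℕ → ℕ → X
  rad : ℕ → ℕ → ℝ
  d : ℝ
  C₁ : ℝ
  C₂ : ℝ
  C₃ : ℝ → ℝ
  d_pos : 0 < d
  d_le_one : d ≤ 1
  one_le_C₁ : 1 ≤ C₁
  one_le_C₂ : 1 ≤ C₂
  borel : ∀ n, ∀ i ∈ idx n, MeasurableSet (Q n i)
  rad_pos : ∀ n, ∀ i ∈ idx n, 0 < rad n i
  -- (I): each level partitions the space
  cover : ∀ (n : ℕ) (x : X), ∃ i ∈ idx n, x ∈ Q n i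
  pairwise_disj : ∀ n, ∀ i ∈ idx n, ∀ j ∈ idx n, i ≠ j → Q n i ∩ Q n j = ∅
  -- (II): nestedness
  nested : ∀ k m, m ≤ k → ∀ i ∈ idx k, ∀ j ∈ idx m, Q k i ∩ Q m j = ∅ ∨ Q k i ⊆ Q m j
  -- (III): cubes squeezed between balls
  ball_subset : ∀ n, ∀ i ∈ idx n, ball (ctr n i) (rad n i) ⊆ Q n i
  subset_ball : ∀ n, ∀ i ∈ idx n, Q n i ⊆ ball (ctr n i) (C₁ * rad n i)
  -- (IV): size of the child cube containing the center
  center_lower : ∀ n, ∀ i ∈ idx n, ∀ j ∈ idx (n + 1), ctr n i ∈ Q (n + 1) j →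
    (1 / C₂) * α n ^ (1 / d) * rad n i ≤ rad (n + 1) j
  center_upper : ∀ n, ∀ i ∈ idx n, ∀ j ∈ idx (n + 1), ctr n i ∈ Q (n + 1) j →
    rad (n + 1) j ≤ C₂ * α n ^ d * rad n i
  center_proper : ∀ n, ∀ i ∈ idx n, ∀ j ∈ idx (n + 1), ctr n i ∈ Q (n + 1) j →
    (Q n i \ Q (n + 1) j).Nonempty
  -- (V): comparability of radii of nearby cubes of the same level
  one_le_C₃ : ∀ T : ℝ, 1 < T → 1 ≤ C₃ T
  comparable : ∀ T : ℝ, 1 < T → ∀ n, ∀ i ∈ idx n, ∀ j ∈ idx n,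
    (Q n i ∩ ball (ctr n j) (T * rad n j)).Nonempty →
    (1 / C₃ T) * rad n j ≤ rad n i ∧ rad n i ≤ C₃ T * rad n j

namespace RegularStructure

variable {X : Type*} [MetricSpace X] [MeasurableSpace X] {α : ℕ → ℝ}

open scoped Classical

/-- `E_n`: the union over `i ∈ N_n` of `Q_{n,i} ∖ Q_{n+1,j(i)}` where `j(i)` is the
index of the `(n+1)`-cube containing the center `x_{n,i}`. -/
def level (S : RegularStructure X α) (n : ℕ) : Set X :=
  {x | ∃ i ∈ S.idx n, ∃ j ∈ S.idx (n + 1),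
    S.ctr n i ∈ S.Q (n + 1) j ∧ x ∈ S.Q n i \ S.Q (n + 1) j}

/-- The `(α n)`-regular set `E = ⋂ n, E_n` determined by the structure. -/
def limitSet (S : RegularStructure X α) : Set X := ⋂ n, S.level n

/-- `⋂_{i=1}^{n-1} E_i`. -/
def preLevel (S : RegularStructure X α) (n : ℕ) : Set X :=
  ⋂ i ∈ Finset.Icc 1 (n - 1), S.level i

/-- `𝔍_{n,j}`: the union of the `(n+1)`-cubes contained in `B(x_{n,j}, r_{n,j}/2)`. -/
def Jset (S : RegularStructure X α) (n j : ℕ) : Set X :=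
  {x | ∃ i ∈ S.idx (n + 1),
    S.Q (n + 1) i ⊆ ball (S.ctr n j) (S.rad n j / 2) ∧ x ∈ S.Q (n + 1) i}

/-- `IN(B(x,r),n)`: the union of the `n`-cubes contained in `B(x,r)`. -/
def INset (S : RegularStructure X α) (x : X) (r : ℝ) (n : ℕ) : Set X :=
  {y | ∃ j ∈ S.idx n, S.Q n j ⊆ ball x r ∧ y ∈ S.Q n j}

/-- `COV(B(x,r),n)`: the union of the `n`-cubes meeting `B(x,r)`. -/
def COVset (S : RegularStructure X α) (x : X) (r : ℝ) (n : ℕ) : Set X :=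
  {y | ∃ j ∈ S.idx n, (S.Q n j ∩ ball x r).Nonempty ∧ y ∈ S.Q n j}

/-- The normalizing constant `A_{n,j} = H(𝔍_{n,j}) / ∫_{𝔍_{n,j}} d(x_{n,j},y)^ρ dH(y)`. -/
noncomputable def Acoef (S : RegularStructure X α) (H : Measure X) (ρ : ℝ) (n j : ℕ) : ℝ :=
  (H (S.Jset n j)).toReal / ∫ y in S.Jset n j, dist (S.ctr n j) y ^ ρ ∂H

/-- The weight `y_n`: equal to `A_{n,j} d(x_{n,j},x)^ρ` on `𝔍_{n,j}` and `1` elsewhere. -/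
noncomputable def weight (S : RegularStructure X α) (H : Measure X) (ρ : ℝ) (n : ℕ)
    (x : X) : ℝ :=
  if h : ∃ j ∈ S.idx n, x ∈ S.Jset n j then
    S.Acoef H ρ n h.choose * dist (S.ctr n h.choose) x ^ ρ
  else 1

/-- The measure `θ_n` with `dθ_n = y_n dH`. -/
noncomputable def theta (S : RegularStructure X α) (H : Measure X) (ρ : ℝ) (n : ℕ) :
    Measure X :=
  H.withDensity fun x => ENNReal.ofReal (S.weight H ρ n x)

/-- The averaged weight `t_n`: on each `(n+1)`-cube `Q`, equal to `θ_n(Q)/H(Q)`. -/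
noncomputable def avgWeight (S : RegularStructure X α) (H : Measure X) (ρ : ℝ) (n : ℕ)
    (x : X) : ℝ :=
  if h : ∃ i ∈ S.idx (n + 1), x ∈ S.Q (n + 1) i then
    (S.theta H ρ n (S.Q (n + 1) h.choose)).toReal / (H (S.Q (n + 1) h.choose)).toReal
  else 1

/-- `K_n = ∏_{i=n₀}^{n} t_i`. -/
noncomputable def Kweight (S : RegularStructure X α) (H : Measure X) (ρ : ℝ)
    (n₀ n : ℕ) (x : X) : ℝ :=
  ∏ i ∈ Finset.Icc n₀ n, S.avgWeight H ρ i x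

/-- The measure `ν_n` with `dν_n = K_n dH`. -/
noncomputable def nu (S : RegularStructure X α) (H : Measure X) (ρ : ℝ) (n₀ n : ℕ) :
    Measure X :=
  H.withDensity fun x => ENNReal.ofReal (S.Kweight H ρ n₀ n x)

/-- A level `n` is good if `B(x_{n,j}, r_{n,j}/16) ⊆ 𝔍_{n,j}` for all `j`, and balls
`B(x,2r)` with `x ∈ Q_{n,j}`, `r ≤ r_{n,j}/(32 C₃(2C₁))` miss all `𝔍_{n,i}`, `i ≠ j`. -/
def GoodLevel (S : RegularStructure X α) (n : ℕ) : Prop :=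
  (∀ j ∈ S.idx n, ball (S.ctr n j) (S.rad n j / 16) ⊆ S.Jset n j) ∧
  (∀ j ∈ S.idx n, ∀ x ∈ S.Q n j, ∀ r : ℝ, 0 < r →
    r ≤ S.rad n j / (32 * S.C₃ (2 * S.C₁)) →
    ∀ i ∈ S.idx n, i ≠ j → ball x (2 * r) ∩ S.Jset n i = ∅)

/-- Relative plumpness of the `(α n)`-regular set determined by the structure. -/
def RelativelyPlump (S : RegularStructure X α) : Prop :=
  ∃ b : ℝ, 0 < b ∧ ∀ x ∈ S.limitSet, ∀ R : ℝ, 0 < R → ∀ n : ℕ,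
    (∃ j ∈ S.idx n, S.Q n j ⊆ ball x R ∩ S.preLevel n) →
    (∀ m, m < n → ¬ ∃ j ∈ S.idx m, S.Q m j ⊆ ball x R ∩ S.preLevel m) →
    ∃ y ∈ S.preLevel n, ball y (b * R) ⊆ ball x R ∩ S.preLevel n

end RegularStructure

/-- `E ⊆ X` is an `(α n)`-regular set. -/
def IsRegularSet {X : Type*} [MetricSpace X] [MeasurableSpace X]
    (α : ℕ → ℝ) (E : Set X) : Prop :=
  ∃ S : RegularStructure X α, E = S.limitSet


set_option maxHeartbeats 1000000 in
/-- measures of balls are comparable with measures of `IN` and `COV`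
for a doubling measure (Corollary 4.3 of the paper). -/
theorem doubling_measure_ball_cube_comparison {X : Type*} [MetricSpace X]
    [MeasurableSpace X] [BorelSpace X]
    (hup : UniformlyPerfect X)
    (α : ℕ → ℝ) (hα : ∀ n, 0 < α n ∧ α n < 1)
    (S : RegularStructure X α)
    (μ : Measure X) (hμ : IsDoublingMeasure μ) :
    ∃ Cμ : NNReal, 1 ≤ Cμ ∧
      ∀ (x : X) (r : ℝ) (n : ℕ), 0 < r → (S.INset x r n).Nonempty →
        μ (S.COVset x (2 * r) n) ≤ (Cμ : ENNReal) * μ (ball x r) ∧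
        μ (ball x r) ≤ (Cμ : ENNReal) * μ (S.INset x r n) := by
  classical
  obtain ⟨C, hC1, hC⟩ := hμ
  obtain ⟨-, D, hD1, hperf⟩ := hup
  have hc₁ : 1 ≤ S.C₁ := S.one_le_C₁
  have hc₁0 : (0:ℝ) < S.C₁ := by linarith
  -- iterated doubling
  have iter : ∀ (m : ℕ) (y : X) (s : ℝ), 0 < s →
      μ (ball y (2 ^ m * s)) ≤ (C : ENNReal) ^ m * μ (ball y s) := by
    intro m
    induction m with
    | zero => intro y s hs; simp
    | succ m ih =>
      intro y s hs
      have h1 : (2:ℝ) ^ (m+1) * s = 2 * (2 ^ m * s) := by ring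
      rw [h1]
      calc μ (ball y (2 * (2 ^ m * s))) ≤ (C:ENNReal) * μ (ball y (2 ^ m * s)) :=
            (hC y (2 ^ m * s) (by positivity)).2.1
        _ ≤ (C:ENNReal) * ((C:ENNReal) ^ m * μ (ball y s)) :=
            mul_le_mul_right (ih y s hs) _
        _ = (C:ENNReal) ^ (m+1) * μ (ball y s) := by ring
  set c₃a := S.C₃ (8 * S.C₁) with hc₃adef
  have hc₃a : 1 ≤ c₃a := S.one_le_C₃ _ (by linarith)
  set c₃b := S.C₃ (S.C₁ + 3) with hc₃bdef
  have hc₃b : 1 ≤ c₃b := S.one_le_C₃ _ (by linarith)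
  set c₃c := S.C₃ (S.C₁ + 2) with hc₃cdef
  have hc₃c : 1 ≤ c₃c := S.one_le_C₃ _ (by linarith)
  set c : ℝ := 1 / (4 * S.C₁ * c₃a) with hcdef
  have hcpos : 0 < c := by positivity
  have hc_le : c ≤ 1 := by
    rw [hcdef]
    rw [div_le_one (by positivity)]
    nlinarith
  set K₀ : ℝ := 2 * D * c₃c with hK₀def
  have hK₀1 : 1 ≤ K₀ := by nlinarith
  set K₁ : ℝ := c₃b * K₀ with hK₁def
  have hK₁1 : 1 ≤ K₁ := by nlinarith
  set K₂ : ℝ := 2 + 2 * S.C₁ * K₁ with hK₂def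
  obtain ⟨m₂, hm₂⟩ : ∃ m : ℕ, K₂ < 2 ^ m := pow_unbounded_of_one_lt K₂ one_lt_two
  obtain ⟨mB, hmB⟩ : ∃ m : ℕ, 2 / c < 2 ^ m := pow_unbounded_of_one_lt (2 / c) one_lt_two
  set M := max (max m₂ mB) 1 with hMdef
  have hCE : 1 ≤ (C : ENNReal) := by exact_mod_cast hC1
  have hcoe : ((C ^ M : NNReal) : ENNReal) = (C : ENNReal) ^ M := by push_cast; ring
  have hpowle : ∀ m, m ≤ M → (C : ENNReal) ^ m ≤ (C : ENNReal) ^ M :=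
    fun m hm => pow_le_pow_right₀ hCE hm
  refine ⟨C ^ M, one_le_pow_of_one_le' hC1 M, ?_⟩
  intro x r n hr hIN
  have hone_le : (1 : ENNReal) ≤ ((C ^ M : NNReal) : ENNReal) := by
    exact_mod_cast one_le_pow_of_one_le' hC1 M
  by_cases hdeg : ∀ z : X, z ∈ ball x r
  · constructor
    · refine le_trans (measure_mono ?_) (le_mul_of_one_le_left zero_le hone_le)
      intro y _; exact hdeg y
    · refine le_trans (measure_mono ?_) (le_mul_of_one_le_left zero_le hone_le)
      intro y hy
      obtain ⟨i, hi, hyQ⟩ := S.cover n y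
      exact ⟨i, hi, fun z _ => hdeg z, hyQ⟩
  push_neg at hdeg
  obtain ⟨z, hz⟩ := hdeg
  -- the cube inside the ball
  obtain ⟨y₀, j, hj, hQj_sub, hy₀⟩ := hIN
  have hrj : 0 < S.rad n j := S.rad_pos n j hj
  have hctrjQ : S.ctr n j ∈ S.Q n j := S.ball_subset n j hj (mem_ball_self hrj)
  have hctrj_mem : S.ctr n j ∈ ball x r := hQj_sub hctrjQ
  have hdxj : dist (S.ctr n j) x < r := by
    have := mem_ball.mp hctrj_mem; rwa [dist_comm] at this ⊢
  -- upper bound for rad n j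
  have hrj_ub : S.rad n j ≤ 2 * D * r := by
    have hne : ((Set.univ : Set X) \ ball (S.ctr n j) (S.rad n j)).Nonempty := by
      refine ⟨z, Set.mem_univ z, fun h => hz (hQj_sub (S.ball_subset n j hj h))⟩
    obtain ⟨w, hw1, hw2⟩ := hperf (S.ctr n j) (S.rad n j) hrj hne
    have hwball : w ∈ ball x r := hQj_sub (S.ball_subset n j hj hw1)
    have h1 : S.rad n j / D ≤ dist w (S.ctr n j) := le_of_not_gt (fun h => hw2 (mem_ball.mpr h))
    have h2 : dist w (S.ctr n j) < 2 * r := by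
      have hwx : dist w x < r := mem_ball.mp hwball
      calc dist w (S.ctr n j) ≤ dist w x + dist x (S.ctr n j) := dist_triangle _ _ _
        _ < r + r := by
            rw [dist_comm x (S.ctr n j)]; exact add_lt_add hwx hdxj
        _ = 2 * r := by ring
    have hD0 : (0:ℝ) < D := by linarith
    rw [div_le_iff₀ hD0] at h1
    nlinarith
  -- the cube containing x
  obtain ⟨i₀, hi₀, hx₀⟩ := S.cover n x
  have hr₀ : 0 < S.rad n i₀ := S.rad_pos n i₀ hi₀
  have hxctr₀ : dist x (S.ctr n i₀) < S.C₁ * S.rad n i₀ :=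
    mem_ball.mp (S.subset_ball n i₀ hi₀ hx₀)
  have hr₀_ub : S.rad n i₀ ≤ K₀ * r := by
    rcases le_or_gt (S.rad n i₀) r with h | h
    · nlinarith
    · have hmem : (S.Q n j ∩ ball (S.ctr n i₀) ((S.C₁ + 2) * S.rad n i₀)).Nonempty := by
        refine ⟨S.ctr n j, hctrjQ, mem_ball.mpr ?_⟩
        calc dist (S.ctr n j) (S.ctr n i₀) ≤ dist (S.ctr n j) x + dist x (S.ctr n i₀) :=
              dist_triangle _ _ _
          _ < r + S.C₁ * S.rad n i₀ := add_lt_add hdxj hxctr₀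
          _ < (S.C₁ + 2) * S.rad n i₀ := by nlinarith
      have hcmp := (S.comparable (S.C₁ + 2) (by linarith) n j hj i₀ hi₀ hmem).1
      rw [← hc₃cdef] at hcmp
      have hc₃c0 : (0:ℝ) < c₃c := by linarith
      rw [one_div, inv_mul_le_iff₀ hc₃c0] at hcmp
      calc S.rad n i₀ ≤ c₃c * S.rad n j := hcmp
        _ ≤ c₃c * (2 * D * r) := by nlinarith
        _ = K₀ * r := by rw [hK₀def]; ring
  constructor
  · -- COV bound
    have hCOV_sub : S.COVset x (2 * r) n ⊆ ball x (2 ^ m₂ * r) := by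
      rintro y ⟨i, hi, ⟨p, hpQ, hpB⟩, hyQ⟩
      have hri : 0 < S.rad n i := S.rad_pos n i hi
      have hpx : dist p x < 2 * r := mem_ball.mp hpB
      have hpc : dist p (S.ctr n i) < S.C₁ * S.rad n i := mem_ball.mp (S.subset_ball n i hi hpQ)
      have hri_ub : S.rad n i ≤ K₁ * r := by
        rcases le_or_gt (S.rad n i) r with h | h
        · nlinarith
        · have hmem : (S.Q n i₀ ∩ ball (S.ctr n i) ((S.C₁ + 3) * S.rad n i)).Nonempty := by
            refine ⟨x, hx₀, mem_ball.mpr ?_⟩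
            calc dist x (S.ctr n i) ≤ dist x p + dist p (S.ctr n i) := dist_triangle _ _ _
              _ < 2 * r + S.C₁ * S.rad n i := by
                  rw [dist_comm]; exact add_lt_add hpx hpc
              _ < (S.C₁ + 3) * S.rad n i := by nlinarith
          have hcmp := (S.comparable (S.C₁ + 3) (by linarith) n i₀ hi₀ i hi hmem).1
          rw [← hc₃bdef] at hcmp
          have hc₃b0 : (0:ℝ) < c₃b := by linarith
          rw [one_div, inv_mul_le_iff₀ hc₃b0] at hcmp
          calc S.rad n i ≤ c₃b * S.rad n i₀ := hcmp
            _ ≤ c₃b * (K₀ * r) := by nlinarith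
            _ = K₁ * r := by rw [hK₁def]; ring
      have hyc : dist y (S.ctr n i) < S.C₁ * S.rad n i := mem_ball.mp (S.subset_ball n i hi hyQ)
      refine mem_ball.mpr ?_
      have hK₂m : K₂ * r ≤ 2 ^ m₂ * r := by nlinarith [hm₂, hr]
      calc dist y x ≤ dist y (S.ctr n i) + dist (S.ctr n i) p + dist p x :=
            dist_triangle4 _ _ _ _
        _ < S.C₁ * S.rad n i + S.C₁ * S.rad n i + 2 * r := by
            rw [dist_comm (S.ctr n i) p]; exact add_lt_add (add_lt_add hyc hpc) hpx
        _ ≤ K₂ * r := by rw [hK₂def]; nlinarith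
        _ ≤ 2 ^ m₂ * r := hK₂m
    calc μ (S.COVset x (2 * r) n) ≤ μ (ball x (2 ^ m₂ * r)) := measure_mono hCOV_sub
      _ ≤ (C : ENNReal) ^ m₂ * μ (ball x r) := iter m₂ x r hr
      _ ≤ ((C ^ M : NNReal) : ENNReal) * μ (ball x r) := by
          rw [hcoe]
          exact mul_le_mul_left (hpowle m₂ (le_trans (le_max_left _ _) (le_max_left _ _))) _
  · -- IN bound
    by_cases hbig : ∃ i ∈ S.idx n, (S.Q n i ∩ ball x (r / 2)).Nonempty ∧ r / (4 * S.C₁) ≤ S.rad n i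
    · obtain ⟨b, hb, ⟨q₀, hq₀Q, hq₀B⟩, hrb⟩ := hbig
      have hrb0 : 0 < S.rad n b := S.rad_pos n b hb
      have hq₀x : dist q₀ x < r / 2 := mem_ball.mp hq₀B
      have hq₀c : dist q₀ (S.ctr n b) < S.C₁ * S.rad n b := mem_ball.mp (S.subset_ball n b hb hq₀Q)
      have hrb' : r ≤ 4 * S.C₁ * S.rad n b := by
        rw [div_le_iff₀ (by positivity)] at hrb; linarith
      have hcr_le : c * r ≤ S.rad n j := by
        have hmem : (S.Q n j ∩ ball (S.ctr n b) (8 * S.C₁ * S.rad n b)).Nonempty := by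
          refine ⟨S.ctr n j, hctrjQ, mem_ball.mpr ?_⟩
          calc dist (S.ctr n j) (S.ctr n b)
              ≤ dist (S.ctr n j) x + dist x q₀ + dist q₀ (S.ctr n b) := dist_triangle4 _ _ _ _
            _ < r + r / 2 + S.C₁ * S.rad n b := by
                rw [dist_comm x q₀]; exact add_lt_add (add_lt_add hdxj hq₀x) hq₀c
            _ < 8 * S.C₁ * S.rad n b := by nlinarith
        have hcmp := (S.comparable (8 * S.C₁) (by linarith) n j hj b hb hmem).1
        rw [← hc₃adef] at hcmp
        have hc₃a0 : (0:ℝ) < c₃a := by linarith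
        rw [one_div, inv_mul_le_iff₀ hc₃a0] at hcmp
        rw [hcdef, one_div, inv_mul_le_iff₀ (by positivity : (0:ℝ) < 4 * S.C₁ * c₃a)]
        nlinarith
      have hball_sub : ball (S.ctr n j) (c * r) ⊆ S.INset x r n := by
        intro w hw
        refine ⟨j, hj, hQj_sub, S.ball_subset n j hj (mem_ball.mpr ?_)⟩
        exact lt_of_lt_of_le (mem_ball.mp hw) hcr_le
      have hsub2 : ball x r ⊆ ball (S.ctr n j) (2 ^ mB * (c * r)) := by
        intro w hw
        refine mem_ball.mpr ?_
        have h2c : 2 * r ≤ 2 ^ mB * (c * r) := by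
          rw [div_lt_iff₀ hcpos] at hmB
          nlinarith
        calc dist w (S.ctr n j) ≤ dist w x + dist x (S.ctr n j) := dist_triangle _ _ _
          _ < r + r := by rw [dist_comm x (S.ctr n j)]; exact add_lt_add (mem_ball.mp hw) hdxj
          _ = 2 * r := by ring
          _ ≤ 2 ^ mB * (c * r) := h2c
      calc μ (ball x r) ≤ μ (ball (S.ctr n j) (2 ^ mB * (c * r))) := measure_mono hsub2
        _ ≤ (C : ENNReal) ^ mB * μ (ball (S.ctr n j) (c * r)) :=
            iter mB (S.ctr n j) (c * r) (by positivity)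
        _ ≤ ((C ^ M : NNReal) : ENNReal) * μ (S.INset x r n) := by
            rw [hcoe]
            exact mul_le_mul' (hpowle mB (le_trans (le_max_right _ _) (le_max_left _ _)))
              (measure_mono hball_sub)
    · push_neg at hbig
      have hsub : ball x (r / 2) ⊆ S.INset x r n := by
        intro w hw
        obtain ⟨i, hi, hwQ⟩ := S.cover n w
        have hri : 0 < S.rad n i := S.rad_pos n i hi
        have hri_ub : S.rad n i < r / (4 * S.C₁) := hbig i hi ⟨w, hwQ, hw⟩
        refine ⟨i, hi, ?_, hwQ⟩
        intro u hu
        have h1 : dist u (S.ctr n i) < S.C₁ * S.rad n i := mem_ball.mp (S.subset_ball n i hi hu)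
        have h2 : dist w (S.ctr n i) < S.C₁ * S.rad n i := mem_ball.mp (S.subset_ball n i hi hwQ)
        have h3 : dist w x < r / 2 := mem_ball.mp hw
        refine mem_ball.mpr ?_
        have hriC : S.C₁ * S.rad n i < r / 4 := by
          rw [lt_div_iff₀ (by positivity)] at hri_ub
          nlinarith
        calc dist u x ≤ dist u (S.ctr n i) + dist (S.ctr n i) w + dist w x :=
              dist_triangle4 _ _ _ _
          _ < S.C₁ * S.rad n i + S.C₁ * S.rad n i + r / 2 := by
              rw [dist_comm (S.ctr n i) w]; exact add_lt_add (add_lt_add h1 h2) h3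
          _ < r := by linarith
      have h1 : μ (ball x r) ≤ (C : ENNReal) * μ (ball x (r / 2)) := by
        have := (hC x (r / 2) (by positivity)).2.1
        have heq : 2 * (r / 2) = r := by ring
        rwa [heq] at this
      calc μ (ball x r) ≤ (C : ENNReal) * μ (ball x (r / 2)) := h1
        _ ≤ ((C ^ M : NNReal) : ENNReal) * μ (S.INset x r n) := by
            rw [hcoe]
            refine mul_le_mul' ?_ (measure_mono hsub)
            calc (C : ENNReal) = (C : ENNReal) ^ 1 := (pow_one _).symm
              _ ≤ (C : ENNReal) ^ M := hpowle 1 (le_max_right _ _)
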